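/- In the group G = ⟨X, Y | X = Y²XY², Y = X²YX²⟩, setting Z = (XY)⁻¹, the elements X², Y², Z² pairwise commute, and conjugation by each of X, Y, Z inverts the squares of the other two (e.g., X⁻¹Y²X = Y⁻², X⁻¹Z²X = Z⁻²). -/

import Mathlib

/-- Relators of the fundamental group of the Hantzsche–Wendt manifold (didicosm `c22`):
generators `X = of 0`, `Y = of 1`, relations `X = Y²XY²`, `Y = X²YX²`. -/
def c22Rels : Set (FreeGroup (Fin 2)) :=
  { (FreeGroup.of 0)⁻¹ * FreeGroup.of 1 ^ 2 * FreeGroup.of 0 * FreeGroup.of 1 ^ 2,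
    (FreeGroup.of 1)⁻¹ * FreeGroup.of 0 ^ 2 * FreeGroup.of 1 * FreeGroup.of 0 ^ 2 }

section Aux
variable {G : Type*} [Group G] {a b : G}

private lemma conjInv (h : a⁻¹ * b * a = b⁻¹) : a⁻¹ * b⁻¹ * a = b := by
  calc a⁻¹ * b⁻¹ * a = (a⁻¹ * b * a)⁻¹ := by group
  _ = b := by rw [h]; group

private lemma moveR (h : a⁻¹ * b * a = b⁻¹) : b * a = a * b⁻¹ := by
  calc b * a = a * (a⁻¹ * b * a) := by group
  _ = a * b⁻¹ := by rw [h]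

private lemma moveR' (h : a⁻¹ * b * a = b⁻¹) : b⁻¹ * a = a * b := by
  calc b⁻¹ * a = a * (a⁻¹ * b⁻¹ * a) := by group
  _ = a * b := by rw [conjInv h]

private lemma moveL (h : a⁻¹ * b * a = b⁻¹) : b * a⁻¹ = a⁻¹ * b⁻¹ := by
  calc b * a⁻¹ = (a * b⁻¹)⁻¹ := by group
  _ = (b * a)⁻¹ := by rw [moveR h]
  _ = a⁻¹ * b⁻¹ := by group

private lemma commuteSq (h : a⁻¹ * b * a = b⁻¹) : Commute (a ^ 2) b := by
  have key : b * a ^ 2 = a ^ 2 * b := by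
    calc b * a ^ 2 = (b * a) * a := by rw [sq, mul_assoc]
    _ = (a * b⁻¹) * a := by rw [moveR h]
    _ = a * (b⁻¹ * a) := by group
    _ = a * (a * b) := by rw [moveR' h]
    _ = a ^ 2 * b := by rw [sq, mul_assoc]
  exact key.symm

private lemma c22Master (X Y : G)
    (h1 : X⁻¹ * Y ^ 2 * X = (Y ^ 2)⁻¹) (h2 : Y⁻¹ * X ^ 2 * Y = (X ^ 2)⁻¹) :
    Commute (X ^ 2) (Y ^ 2) ∧ Commute (X ^ 2) ((X * Y)⁻¹ ^ 2) ∧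
    Commute (Y ^ 2) ((X * Y)⁻¹ ^ 2) ∧
    X⁻¹ * Y ^ 2 * X = (Y ^ 2)⁻¹ ∧ X⁻¹ * (X * Y)⁻¹ ^ 2 * X = ((X * Y)⁻¹ ^ 2)⁻¹ ∧
    Y⁻¹ * X ^ 2 * Y = (X ^ 2)⁻¹ ∧ Y⁻¹ * (X * Y)⁻¹ ^ 2 * Y = ((X * Y)⁻¹ ^ 2)⁻¹ ∧
    ((X * Y)⁻¹)⁻¹ * X ^ 2 * (X * Y)⁻¹ = (X ^ 2)⁻¹ ∧
    ((X * Y)⁻¹)⁻¹ * Y ^ 2 * (X * Y)⁻¹ = (Y ^ 2)⁻¹ := by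
  have k1 : X * Y * X * Y ^ 2 * X * Y * X = 1 := by
    calc X * Y * X * Y ^ 2 * X * Y * X
        = X * Y * X * (Y ^ 2 * X) * (Y * X) := by group
    _ = X * Y * X * (X * (Y ^ 2)⁻¹) * (Y * X) := by rw [moveR h1]
    _ = X * Y * (X ^ 2 * Y⁻¹) * X := by simp only [sq]; group
    _ = X * Y * (Y⁻¹ * (X ^ 2)⁻¹) * X := by rw [moveL h2]
    _ = 1 := by group
  have k2 : X * Y * X ^ 2 * Y * X * Y ^ 2 = 1 := by
    calc X * Y * X ^ 2 * Y * X * Y ^ 2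
        = X * Y * (X ^ 2 * Y) * (X * Y ^ 2) := by group
    _ = X * Y * (Y * (X ^ 2)⁻¹) * (X * Y ^ 2) := by rw [moveR h2]
    _ = X * (Y ^ 2 * X⁻¹) * Y ^ 2 := by simp only [sq]; group
    _ = X * (X⁻¹ * (Y ^ 2)⁻¹) * Y ^ 2 := by rw [moveL h1]
    _ = 1 := by group
  have g5 : X⁻¹ * (X * Y)⁻¹ ^ 2 * X = ((X * Y)⁻¹ ^ 2)⁻¹ := by
    rw [← mul_eq_one_iff_eq_inv]
    calc X⁻¹ * (X * Y)⁻¹ ^ 2 * X * (X * Y)⁻¹ ^ 2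
        = (X * Y * X * Y ^ 2 * X * Y * X)⁻¹ := by simp only [sq]; group
    _ = 1 := by rw [k1]; group
  have g7 : Y⁻¹ * (X * Y)⁻¹ ^ 2 * Y = ((X * Y)⁻¹ ^ 2)⁻¹ := by
    rw [← mul_eq_one_iff_eq_inv]
    calc Y⁻¹ * (X * Y)⁻¹ ^ 2 * Y * (X * Y)⁻¹ ^ 2
        = (X * Y * X ^ 2 * Y * X * Y ^ 2)⁻¹ := by simp only [sq]; group
    _ = 1 := by rw [k2]; group
  have g8 : ((X * Y)⁻¹)⁻¹ * X ^ 2 * (X * Y)⁻¹ = (X ^ 2)⁻¹ := by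
    calc ((X * Y)⁻¹)⁻¹ * X ^ 2 * (X * Y)⁻¹
        = X * Y * (X ^ 2 * Y⁻¹) * X⁻¹ := by group
    _ = X * Y * (Y⁻¹ * (X ^ 2)⁻¹) * X⁻¹ := by rw [moveL h2]
    _ = (X ^ 2)⁻¹ := by group
  have g9 : ((X * Y)⁻¹)⁻¹ * Y ^ 2 * (X * Y)⁻¹ = (Y ^ 2)⁻¹ := by
    calc ((X * Y)⁻¹)⁻¹ * Y ^ 2 * (X * Y)⁻¹
        = X * (Y ^ 2 * X⁻¹) := by group
    _ = X * (X⁻¹ * (Y ^ 2)⁻¹) := by rw [moveL h1]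
    _ = (Y ^ 2)⁻¹ := by group
  exact ⟨(commuteSq h2).symm, commuteSq g5, commuteSq g7, h1, g5, h2, g7, g8, g9⟩

end Aux

/-- In the didicosm group `G = ⟨X, Y | X = Y²XY², Y = X²YX²⟩`, with `Z = (XY)⁻¹`,
the elements `X², Y², Z²` pairwise commute, and conjugation by each of `X, Y, Z`
inverts the squares of the other two. -/
theorem c22_translation_relations :
    let X : PresentedGroup c22Rels := PresentedGroup.of 0
    let Y : PresentedGroup c22Rels := PresentedGroup.of 1
    let Z : PresentedGroup c22Rels := (X * Y)⁻¹
    Commute (X ^ 2) (Y ^ 2) ∧ Commute (X ^ 2) (Z ^ 2) ∧ Commute (Y ^ 2) (Z ^ 2) ∧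
    X⁻¹ * Y ^ 2 * X = (Y ^ 2)⁻¹ ∧ X⁻¹ * Z ^ 2 * X = (Z ^ 2)⁻¹ ∧
    Y⁻¹ * X ^ 2 * Y = (X ^ 2)⁻¹ ∧ Y⁻¹ * Z ^ 2 * Y = (Z ^ 2)⁻¹ ∧
    Z⁻¹ * X ^ 2 * Z = (X ^ 2)⁻¹ ∧ Z⁻¹ * Y ^ 2 * Z = (Y ^ 2)⁻¹ := by
  intro X Y Z
  have mem1 : ((FreeGroup.of 0)⁻¹ * FreeGroup.of 1 ^ 2 * FreeGroup.of 0 * FreeGroup.of 1 ^ 2 :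
      FreeGroup (Fin 2)) ∈ Subgroup.normalClosure c22Rels :=
    Subgroup.subset_normalClosure (by simp [c22Rels])
  have mem2 : ((FreeGroup.of 1)⁻¹ * FreeGroup.of 0 ^ 2 * FreeGroup.of 1 * FreeGroup.of 0 ^ 2 :
      FreeGroup (Fin 2)) ∈ Subgroup.normalClosure c22Rels :=
    Subgroup.subset_normalClosure (by simp [c22Rels])
  have e1 : X⁻¹ * Y ^ 2 * X * Y ^ 2 = 1 := by
    have := (QuotientGroup.eq_one_iff _).2 mem1
    exact this
  have e2 : Y⁻¹ * X ^ 2 * Y * X ^ 2 = 1 := by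
    have := (QuotientGroup.eq_one_iff _).2 mem2
    exact this
  have h1 : X⁻¹ * Y ^ 2 * X = (Y ^ 2)⁻¹ := by
    rw [← mul_eq_one_iff_eq_inv]; exact e1
  have h2 : Y⁻¹ * X ^ 2 * Y = (X ^ 2)⁻¹ := by
    rw [← mul_eq_one_iff_eq_inv]; exact e2
  exact c22Master X Y h1 h2
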